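/- Let R₁, …, R_m ∈ ℝ^k with weights w₁, …, w_m > 0 summing to 1, let R'₁, …, R'_{m'} ∈ ℝ^k with weights w'₁, …, w'_{m'} > 0 summing to 1, and let q ∈ [1,∞]. Then every admissible flow (f_{ij}) satisfies Σ_{i,j} f_{ij}·‖Rᵢ − R'_j‖_q ≥ ‖Σᵢ wᵢRᵢ − Σⱼ w'_jR'_j‖_q; consequently the EMD between these two weighted distributions with ground distance the ℓ_q distance on ℝ^k is at least ‖Σᵢ wᵢRᵢ − Σⱼ w'_jR'_j‖_q. -/

import Mathlib

open scoped ENNReal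

/-- The `ℓ_q` norm of a vector in `ℝ^k`, for `q ∈ [1,∞]`:
`‖x‖_q = (Σⱼ |xⱼ|^q)^(1/q)` for finite `q`, and `‖x‖_∞ = maxⱼ |xⱼ|`. -/
noncomputable def lqnorm (q : ℝ≥0∞) {k : ℕ} (x : Fin k → ℝ) : ℝ :=
  if q = ⊤ then ⨆ j, |x j| else (∑ j, |x j| ^ q.toReal) ^ (1 / q.toReal)

/-- The Earth Mover's Distance between the weighted distribution `(Rᵢ, wᵢ)` and
the weighted distribution `(R'ⱼ, w'ⱼ)` with ground distance `D`: the infimum of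
`Σ_{i,j} f_{ij} D(Rᵢ, R'ⱼ)` over admissible flows `(f_{ij})`. -/
noncomputable def EMD {X Y : Type*} {m m' : ℕ} (D : X → Y → ℝ)
    (R : Fin m → X) (w : Fin m → ℝ) (R' : Fin m' → Y) (w' : Fin m' → ℝ) : ℝ :=
  sInf {c : ℝ | ∃ f : Fin m → Fin m' → ℝ,
    (∀ i j, 0 ≤ f i j ∧ f i j ≤ 1) ∧
    (∀ j, ∑ i, f i j ≤ w' j) ∧
    (∀ i, ∑ j, f i j ≤ w i) ∧
    (∑ i, ∑ j, f i j) = 1 ∧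
    c = ∑ i, ∑ j, f i j * D (R i) (R' j)}

lemma lqnorm_eq_norm (q : ℝ≥0∞) (hq : 1 ≤ q) {k : ℕ} (x : Fin k → ℝ) :
    lqnorm q x = @norm (PiLp q (fun _ : Fin k => ℝ)) _ (WithLp.toLp q x) := by
  haveI : Fact (1 ≤ q) := ⟨hq⟩
  rcases eq_or_ne q ⊤ with h | h
  · subst h
    simp [lqnorm, PiLp.norm_eq_ciSup, Real.norm_eq_abs]
  · have hpos : 0 < q.toReal :=
      ENNReal.toReal_pos (fun h0 => by simp [h0] at hq) h
    rw [lqnorm, if_neg h, PiLp.norm_eq_sum hpos]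
    simp [Real.norm_eq_abs]

/-- Every admissible flow `(f_{ij})` between two weighted
distributions in `ℝ^k` satisfies
`Σ_{i,j} f_{ij}·‖Rᵢ − R'ⱼ‖_q ≥ ‖Σᵢ wᵢRᵢ − Σⱼ w'ⱼR'ⱼ‖_q`; consequently the EMD
with ground distance `ℓ_q` is at least `‖Σᵢ wᵢRᵢ − Σⱼ w'ⱼR'ⱼ‖_q`. -/
theorem stmt_5 (k : ℕ) (q : ℝ≥0∞) (hq : 1 ≤ q) (m m' : ℕ) (hm : 1 ≤ m) (hm' : 1 ≤ m')
    (R : Fin m → Fin k → ℝ) (w : Fin m → ℝ)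
    (R' : Fin m' → Fin k → ℝ) (w' : Fin m' → ℝ)
    (hw : ∀ i, 0 < w i) (hW : ∑ i, w i = 1)
    (hw' : ∀ j, 0 < w' j) (hW' : ∑ j, w' j = 1) :
    (∀ f : Fin m → Fin m' → ℝ,
      (∀ i j, 0 ≤ f i j ∧ f i j ≤ 1) →
      (∀ j, ∑ i, f i j ≤ w' j) →
      (∀ i, ∑ j, f i j ≤ w i) →
      (∑ i, ∑ j, f i j) = 1 →
      lqnorm q ((∑ i, w i • R i) - (∑ j, w' j • R' j)) ≤
        ∑ i, ∑ j, f i j * lqnorm q (fun t => R i t - R' j t)) ∧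
    lqnorm q ((∑ i, w i • R i) - (∑ j, w' j • R' j)) ≤
      EMD (fun x y => lqnorm q (fun t => x t - y t)) R w R' w' := by
  haveI : Fact (1 ≤ q) := ⟨hq⟩
  have key : ∀ f : Fin m → Fin m' → ℝ,
      (∀ i j, 0 ≤ f i j ∧ f i j ≤ 1) →
      (∀ j, ∑ i, f i j ≤ w' j) →
      (∀ i, ∑ j, f i j ≤ w i) →
      (∑ i, ∑ j, f i j) = 1 →
      lqnorm q ((∑ i, w i • R i) - (∑ j, w' j • R' j)) ≤
        ∑ i, ∑ j, f i j * lqnorm q (fun t => R i t - R' j t) := by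
    intro f hf01 hcol hrow htot
    -- marginals are exact
    have hrow' : ∀ i, ∑ j, f i j = w i := by
      have hz : ∑ i, (w i - ∑ j, f i j) = 0 := by
        rw [Finset.sum_sub_distrib, hW, htot, sub_self]
      intro i
      have := (Finset.sum_eq_zero_iff_of_nonneg
        (fun i _ => sub_nonneg.mpr (hrow i))).mp hz i (Finset.mem_univ i)
      linarith
    have hcol' : ∀ j, ∑ i, f i j = w' j := by
      have htot' : ∑ j, ∑ i, f i j = 1 := by rw [Finset.sum_comm]; exact htot
      have hz : ∑ j, (w' j - ∑ i, f i j) = 0 := by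
        rw [Finset.sum_sub_distrib, hW', htot', sub_self]
      intro j
      have := (Finset.sum_eq_zero_iff_of_nonneg
        (fun j _ => sub_nonneg.mpr (hcol j))).mp hz j (Finset.mem_univ j)
      linarith
    -- rewrite as double sum
    have hsum : ((∑ i, w i • R i) - (∑ j, w' j • R' j) : Fin k → ℝ)
        = ∑ i, ∑ j, f i j • (R i - R' j) := by
      have : ∀ i, ∑ j, f i j • (R i - R' j)
          = w i • R i - ∑ j, f i j • R' j := by
        intro i
        simp only [smul_sub, Finset.sum_sub_distrib, ← Finset.sum_smul, hrow' i]
      rw [Finset.sum_congr rfl (fun i _ => this i), Finset.sum_sub_distrib]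
      congr 1
      rw [Finset.sum_comm]
      exact Finset.sum_congr rfl fun j _ => by
        rw [← Finset.sum_smul, hcol' j]
    rw [hsum, lqnorm_eq_norm q hq]
    calc @norm (PiLp q (fun _ : Fin k => ℝ)) _ (WithLp.toLp q (∑ i, ∑ j, f i j • (R i - R' j)))
        ≤ ∑ i, @norm (PiLp q (fun _ : Fin k => ℝ)) _ (WithLp.toLp q (∑ j, f i j • (R i - R' j))) := by
          rw [WithLp.toLp_sum]; exact norm_sum_le _ _
      _ ≤ ∑ i, ∑ j, @norm (PiLp q (fun _ : Fin k => ℝ)) _ (WithLp.toLp q (f i j • (R i - R' j))) :=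
          Finset.sum_le_sum fun i _ => by rw [WithLp.toLp_sum]; exact norm_sum_le _ _
      _ = ∑ i, ∑ j, f i j * lqnorm q (fun t => R i t - R' j t) := by
          refine Finset.sum_congr rfl fun i _ => Finset.sum_congr rfl fun j _ => ?_
          rw [lqnorm_eq_norm q hq]
          have : (fun t => R i t - R' j t) = R i - R' j := rfl
          rw [this, WithLp.toLp_smul, norm_smul, Real.norm_eq_abs, abs_of_nonneg (hf01 i j).1]
  refine ⟨key, ?_⟩
  apply le_csInf
  · refine ⟨∑ i, ∑ j, (w i * w' j) * lqnorm q (fun t => R i t - R' j t),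
      fun i j => w i * w' j, ?_, ?_, ?_, ?_, rfl⟩
    · intro i j
      have hwi1 : w i ≤ 1 := hW ▸ Finset.single_le_sum (fun i _ => (hw i).le) (Finset.mem_univ i)
      have hwj1 : w' j ≤ 1 := hW' ▸ Finset.single_le_sum (fun j _ => (hw' j).le) (Finset.mem_univ j)
      exact ⟨mul_nonneg (hw i).le (hw' j).le,
        mul_le_one₀ hwi1 (hw' j).le hwj1⟩
    · intro j; rw [← Finset.sum_mul, hW, one_mul]
    · intro i; rw [← Finset.mul_sum, hW', mul_one]
    · simp only [← Finset.mul_sum, hW', mul_one, hW]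
  · rintro c ⟨f, hf01, hcol, hrow, htot, rfl⟩
    exact key f hf01 hcol hrow htot
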